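/- For integers i ≥ 0 and m ≥ 1, the identity Σ_{k=0}^{i} (−1)^{i−k+1} · (m/(m+k)) · C(i,k) = (−1)^{i+1} / C(i+m, m) holds. -/

import Mathlib

open Finset

lemma aux14 (i : ℕ) : ∀ n : ℕ,
    ∑ k ∈ range (i + 1), (-1 : ℚ) ^ k * (i.choose k : ℚ) / ((n : ℚ) + 1 + (k : ℚ)) =
      (i.factorial : ℚ) * (n.factorial : ℚ) / ((i + n + 1).factorial : ℚ) := by
  induction i with
  | zero =>
    intro n
    have h : ((n : ℚ) + 1) ≠ 0 := by positivity
    simp [Nat.factorial_succ]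
    field_simp
  | succ i ih =>
    intro n
    rw [Finset.sum_range_succ']
    have e1 : ∑ k ∈ range (i + 1), (-1 : ℚ) ^ (k + 1) * ((i + 1).choose (k + 1) : ℚ) /
          ((n : ℚ) + 1 + ((k : ℚ) + 1))
        = (∑ k ∈ range (i + 1),
            -((-1 : ℚ) ^ k * (i.choose k : ℚ) / (((n : ℚ) + 1) + 1 + (k : ℚ))))
          + ∑ k ∈ range (i + 1),
            (-1 : ℚ) ^ (k + 1) * (i.choose (k + 1) : ℚ) / ((n : ℚ) + 1 + ((k : ℚ) + 1)) := by
      rw [← Finset.sum_add_distrib]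
      refine Finset.sum_congr rfl fun k _ => ?_
      rw [Nat.choose_succ_succ]
      push_cast
      ring
    push_cast
    rw [e1]
    have ih1 := ih (n + 1)
    push_cast at ih1
    have ihn := ih n
    rw [Finset.sum_range_succ'] at ihn
    push_cast at ihn
    have hz : (-1 : ℚ) ^ (i + 1) * (i.choose (i + 1) : ℚ) / ((n : ℚ) + 1 + ((i : ℚ) + 1)) = 0 := by
      simp [Nat.choose_succ_self]
    have e2 : ∑ k ∈ range (i + 1),
        (-1 : ℚ) ^ (k + 1) * (i.choose (k + 1) : ℚ) / ((n : ℚ) + 1 + ((k : ℚ) + 1))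
        = ∑ k ∈ range i,
        (-1 : ℚ) ^ (k + 1) * (i.choose (k + 1) : ℚ) / ((n : ℚ) + 1 + ((k : ℚ) + 1)) := by
      rw [Finset.sum_range_succ, hz, add_zero]
    rw [e2]
    have hsum : ∑ k ∈ range i,
        (-1 : ℚ) ^ (k + 1) * (i.choose (k + 1) : ℚ) / ((n : ℚ) + 1 + ((k : ℚ) + 1))
        = (i.factorial : ℚ) * (n.factorial : ℚ) / ((i + n + 1).factorial : ℚ)
          - 1 / ((n : ℚ) + 1) := by
      have : ((-1 : ℚ)) ^ 0 * (i.choose 0 : ℚ) / ((n : ℚ) + 1 + 0) = 1 / ((n : ℚ) + 1) := by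
        simp
      rw [this] at ihn
      linarith [ihn]
    rw [hsum, Finset.sum_neg_distrib, ih1]
    have hidx1 : i + (n + 1) + 1 = (i + n + 1) + 1 := by ring
    have hidx2 : i + 1 + n + 1 = (i + n + 1) + 1 := by ring
    rw [hidx1, hidx2, Nat.factorial_succ (i + n + 1), Nat.factorial_succ n,
      Nat.factorial_succ i]
    have hc : ((i + n + 1).factorial : ℚ) ≠ 0 := by positivity
    have hn1 : ((n : ℚ) + 1) ≠ 0 := by positivity
    have hin : ((i : ℚ) + (n : ℚ) + 1 + 1) ≠ 0 := by positivity
    push_cast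
    field_simp
    simp only [Nat.choose_zero_right, Nat.cast_one]
    ring
theorem stmt14 (i m : ℕ) (hm : 1 ≤ m) :
    ∑ k ∈ Finset.range (i + 1),
      (-1 : ℚ) ^ (i - k + 1) * ((m : ℚ) / ((m : ℚ) + (k : ℚ))) * (i.choose k : ℚ) =
      (-1 : ℚ) ^ (i + 1) / ((i + m).choose m : ℚ) := by
  obtain ⟨n, rfl⟩ : ∃ n, m = n + 1 := ⟨m - 1, by omega⟩
  have key := aux14 i n
  have step : ∑ k ∈ Finset.range (i + 1),
      (-1 : ℚ) ^ (i - k + 1) * (((n + 1 : ℕ) : ℚ) / (((n + 1 : ℕ) : ℚ) + (k : ℚ))) *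
        (i.choose k : ℚ)
      = (-1 : ℚ) ^ (i + 1) * ((n : ℚ) + 1) *
        ∑ k ∈ range (i + 1), (-1 : ℚ) ^ k * (i.choose k : ℚ) / ((n : ℚ) + 1 + (k : ℚ)) := by
    rw [Finset.mul_sum]
    refine Finset.sum_congr rfl fun k hk => ?_
    have hk' : k ≤ i := by
      simpa [Finset.mem_range, Nat.lt_succ_iff] using hk
    have h2 : (-1 : ℚ) ^ k * (-1 : ℚ) ^ k = 1 := by
      rw [← pow_add]
      exact Even.neg_one_pow ⟨k, rfl⟩
    have h1 : (-1 : ℚ) ^ (i - k + 1) * (-1 : ℚ) ^ k = (-1 : ℚ) ^ (i + 1) := by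
      rw [← pow_add]
      congr 1
      omega
    have hsign : (-1 : ℚ) ^ (i - k + 1) = (-1 : ℚ) ^ (i + 1) * (-1 : ℚ) ^ k := by
      calc (-1 : ℚ) ^ (i - k + 1) = (-1 : ℚ) ^ (i - k + 1) * ((-1 : ℚ) ^ k * (-1 : ℚ) ^ k) := by
            rw [h2, mul_one]
        _ = ((-1 : ℚ) ^ (i - k + 1) * (-1 : ℚ) ^ k) * (-1 : ℚ) ^ k := by ring
        _ = (-1 : ℚ) ^ (i + 1) * (-1 : ℚ) ^ k := by rw [h1]
    rw [hsign]
    push_cast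
    ring
  rw [step, key]
  have hle : n + 1 ≤ i + (n + 1) := le_add_self
  rw [Nat.cast_choose ℚ hle, Nat.add_sub_cancel]
  have hidx : i + (n + 1) = (i + n + 1) := by ring
  rw [hidx, Nat.factorial_succ n]
  have hc : ((i + n + 1).factorial : ℚ) ≠ 0 := by positivity
  have hi : ((i).factorial : ℚ) ≠ 0 := by positivity
  have hnn : ((n).factorial : ℚ) ≠ 0 := by positivity
  have hn1 : ((n : ℚ) + 1) ≠ 0 := by positivity
  push_cast
  field_simp
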